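/- Let d ≥ 1 and k ≥ 1 be integers and let C_1, …, C_n be convex subsets of ℝ^d, each with nonempty interior. If every hyperplane in ℝ^d avoids at least k of the sets C_1, …, C_n, then n ≥ d + k. -/

import Mathlib

open MeasureTheory Set Metric
open scoped ENNReal
noncomputable section

abbrev Euc (d : ℕ) := EuclideanSpace ℝ (Fin d)

/-- A nice measure on ℝ^d: a probability measure with a continuous,
strictly positive density with respect to Lebesgue measure. -/
def NiceMeasure (d : ℕ) (μ : Measure (Euc d)) : Prop :=
  IsProbabilityMeasure μ ∧ ∃ f : Euc d → ℝ, Continuous f ∧ (∀ x, 0 < f x) ∧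
    μ = volume.withDensity (fun x => ENNReal.ofReal (f x))

/-- The affine hyperplane with normal vector `v` and offset `c`. -/
def Hyperplane {d : ℕ} (v : Euc d) (c : ℝ) : Set (Euc d) := {x | inner (𝕜 := ℝ) v x = c}

/-- A set `H` avoids a set `C` if `H` is disjoint from the interior of `C`. -/
def Avoids {d : ℕ} (H C : Set (Euc d)) : Prop := H ∩ interior C = ∅

/-- A convex partition of ℝ^d into `n` parts: `n` closed convex sets with pairwise
disjoint interiors whose union is all of ℝ^d. -/
def IsConvexPartition {d n : ℕ} (C : Fin n → Set (Euc d)) : Prop :=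
  (∀ i, IsClosed (C i)) ∧ (∀ i, Convex ℝ (C i)) ∧
  (∀ i j, i ≠ j → interior (C i) ∩ interior (C j) = ∅) ∧ (⋃ i, C i) = univ

/-- A `k`-equipartition of `μ` into `n` parts: a convex partition into `n` parts,
each of measure `1/n`, such that every hyperplane avoids at least `k` parts. -/
def IsEquipartition {d n : ℕ} (μ : Measure (Euc d)) (k : ℕ) (C : Fin n → Set (Euc d)) : Prop :=
  IsConvexPartition C ∧ (∀ i, μ (C i) = (n : ℝ≥0∞)⁻¹) ∧
  ∀ v : Euc d, ∀ c : ℝ, v ≠ 0 → k ≤ {i | Avoids (Hyperplane v c) (C i)}.ncard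

/-- Every nice measure on ℝ^d admits a `k`-equipartition into `n` parts. -/
def HasEquipartition (d k n : ℕ) : Prop :=
  ∀ μ : Measure (Euc d), NiceMeasure d μ → ∃ C : Fin n → Set (Euc d), IsEquipartition μ k C

/-- `N_d(k)`: the smallest positive `n` such that every nice measure on ℝ^d admits a
`k`-equipartition into `n` parts. -/
def Nd (d k : ℕ) : ℕ := sInf {n | 0 < n ∧ HasEquipartition d k n}

/-- If every hyperplane in ℝ^d avoids at least k of n convex sets with nonempty interior,
then n ≥ d + k. -/
lemma exists_hyp {d m : ℕ} (hd : 1 ≤ d) (hm : m ≤ d) (x : Fin m → Euc d) :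
    ∃ v : Euc d, ∃ c : ℝ, v ≠ 0 ∧ ∀ i, inner (𝕜 := ℝ) v (x i) = c := by
  classical
  match m with
  | 0 =>
    refine ⟨EuclideanSpace.single ⟨0, hd⟩ 1, 0, ?_, fun i => i.elim0⟩
    intro h
    have := congrArg (fun f : Euc d => f ⟨0, hd⟩) h
    simp [EuclideanSpace.single_apply] at this
  | m' + 1 =>
    set W := Submodule.span ℝ (Set.range fun j : Fin m' => x j.succ - x 0) with hWdef
    have hW : W < ⊤ := by
      apply span_lt_top_of_card_lt_finrank
      rw [finrank_euclideanSpace_fin]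
      have h1 : (Set.range fun j : Fin m' => x j.succ - x 0).toFinset.card ≤ m' := by
        rw [Set.toFinset_range]
        exact (Finset.card_image_le).trans (by simp)
      omega
    have hWb : Wᗮ ≠ ⊥ := fun hb => hW.ne (Submodule.orthogonal_eq_bot_iff.mp hb)
    obtain ⟨v, hvW, hv⟩ := Submodule.exists_mem_ne_zero_of_ne_bot hWb
    refine ⟨v, inner ℝ v (x 0), hv, ?_⟩
    intro i
    rcases Fin.eq_zero_or_eq_succ i with rfl | ⟨j, rfl⟩
    · rfl
    · have h0 : inner (𝕜 := ℝ) (x j.succ - x 0) v = 0 :=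
        (Submodule.mem_orthogonal W v).mp hvW _ (Submodule.subset_span ⟨j, rfl⟩)
      rw [real_inner_comm, inner_sub_right] at h0
      linarith [h0]

theorem n_ge_d_add_k (d k n : ℕ) (hd : 1 ≤ d) (hk : 1 ≤ k)
    (C : Fin n → Set (Euc d)) (hconv : ∀ i, Convex ℝ (C i))
    (hint : ∀ i, (interior (C i)).Nonempty)
    (havoid : ∀ v : Euc d, ∀ c : ℝ, v ≠ 0 →
      k ≤ {i | Avoids (Hyperplane v c) (C i)}.ncard) :
    d + k ≤ n := by
  classical
  choose x hx using hint
  -- Step 1: d ≤ n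
  have hdn : d ≤ n := by
    by_contra hlt
    push_neg at hlt
    obtain ⟨v, c, hv, hall⟩ := exists_hyp hd hlt.le x
    have := havoid v c hv
    have hempty : {i | Avoids (Hyperplane v c) (C i)} = ∅ := by
      ext i
      simp only [Set.mem_setOf_eq, Set.mem_empty_iff_false, iff_false]
      intro hA
      have : x i ∈ Hyperplane v c ∩ interior (C i) := ⟨hall i, hx i⟩
      rw [hA] at this
      exact this
    rw [hempty, Set.ncard_empty] at this
    omega
  -- Step 2: main bound
  obtain ⟨v, c, hv, hall⟩ := exists_hyp hd le_rfl (fun j : Fin d => x (Fin.castLE hdn j))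
  have hsub : {i | Avoids (Hyperplane v c) (C i)} ⊆ (Set.range (Fin.castLE hdn))ᶜ := by
    intro i hi
    simp only [Set.mem_compl_iff, Set.mem_range]
    rintro ⟨j, rfl⟩
    have : x (Fin.castLE hdn j) ∈ Hyperplane v c ∩ interior (C (Fin.castLE hdn j)) :=
      ⟨hall j, hx _⟩
    rw [hi] at this
    exact this
  have hcard : {i | Avoids (Hyperplane v c) (C i)}.ncard ≤ n - d := by
    refine (Set.ncard_le_ncard hsub (Set.toFinite _)).trans ?_
    have h1 : (Set.range (Fin.castLE hdn)).ncard = d := by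
      rw [Set.ncard_eq_toFinset_card', Set.toFinset_range,
        Finset.card_image_of_injective _ (Fin.castLE_injective hdn)]
      simp
    have h2 := Set.ncard_add_ncard_compl (Set.range (Fin.castLE hdn))
    simp only [Set.ncard_univ, Nat.card_eq_fintype_card, Fintype.card_fin] at h2
    omega
  have := havoid v c hv
  omega
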